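/- Suppose G is β-Lipschitz, i.e. ‖G(x) − G(y)‖ ≤ β‖x − y‖ for all x, y ∈ ℝ^m, and the Jacobian has operator norm bounded as ‖J(x)‖ ≤ θ₂ for all x. Then the attack loss L(x) = ‖G(x) − g‖² is (2(β + θ₂), β², 1/2)-semi-smooth: for all x, y ∈ ℝ^m, L(y) ≤ L(x) + ⟨∇L(x), y − x⟩ + β²‖y − x‖² + 2(β + θ₂)‖y − x‖·L(x)^{1/2}. -/

import Mathlib

open scoped RealInnerProductSpace InnerProductSpace

lemma grad_normsq {E F : Type*} [NormedAddCommGroup E] [InnerProductSpace ℝ E]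
    [FiniteDimensional ℝ E] [NormedAddCommGroup F] [InnerProductSpace ℝ F]
    [FiniteDimensional ℝ F]
    (G : E → F) (g : F) (hG : ContDiff ℝ 1 G) (x : E) :
    HasGradientAt (fun z => ‖G z - g‖ ^ 2)
      ((2:ℝ) • (ContinuousLinearMap.adjoint (fderiv ℝ G x) (G x - g))) x := by
  have hd : HasFDerivAt G (fderiv ℝ G x) x :=
    (hG.differentiable one_ne_zero).differentiableAt.hasFDerivAt
  have hd' : HasFDerivAt (fun z => G z - g) (fderiv ℝ G x) x := hd.sub_const g
  have h1 := hd'.inner ℝ hd'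
  have h2 : (fun z => ⟪G z - g, G z - g⟫_ℝ) = fun z => ‖G z - g‖ ^ 2 := by
    funext z; rw [real_inner_self_eq_norm_sq]
  rw [h2] at h1
  rw [hasGradientAt_iff_hasFDerivAt]
  refine h1.congr_fderiv ?_
  ext v
  simp [ContinuousLinearMap.adjoint_inner_left, real_inner_smul_left,
    real_inner_comm, fderivInnerCLM, inner_sub_left]
  ring


/-- If the weight-gradient map `G` is `β`-Lipschitz and its Jacobian has operator
norm at most `θ₂`, then the attack loss `L(x) = ‖G x − g‖²` is
`(2(β + θ₂), β², 1/2)`-semi-smooth. -/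
theorem attack_loss_semi_smooth
    {E F : Type*} [NormedAddCommGroup E] [InnerProductSpace ℝ E]
    [FiniteDimensional ℝ E] [NormedAddCommGroup F] [InnerProductSpace ℝ F]
    [FiniteDimensional ℝ F]
    (G : E → F) (g : F) (β θ₂ : ℝ)
    (hG : ContDiff ℝ 1 G)
    (hLip : ∀ x y : E, ‖G x - G y‖ ≤ β * ‖x - y‖)
    (hJ : ∀ x : E, ‖fderiv ℝ G x‖ ≤ θ₂) :
    ∀ x y : E,
      ‖G y - g‖ ^ 2
        ≤ ‖G x - g‖ ^ 2 + ⟪gradient (fun z => ‖G z - g‖ ^ 2) x, y - x⟫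
          + β ^ 2 * ‖y - x‖ ^ 2
          + 2 * (β + θ₂) * ‖y - x‖ * Real.sqrt (‖G x - g‖ ^ 2) := by
  intro x y
  set J := fderiv ℝ G x with hJdef
  set u := G x - g with hu
  set v := y - x with hv
  have hgrad := (grad_normsq G g hG x).gradient
  rw [hgrad]
  have hip : ⟪(2:ℝ) • (ContinuousLinearMap.adjoint J u), v⟫ = 2 * ⟪u, J v⟫ := by
    rw [real_inner_smul_left, ContinuousLinearMap.adjoint_inner_left]
  rw [hip, Real.sqrt_sq (norm_nonneg u)]
  have key : ‖G y - g‖ ^ 2 = ‖u‖ ^ 2 + 2 * ⟪u, G y - G x⟫ + ‖G y - G x‖ ^ 2 := by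
    have h : G y - g = u + (G y - G x) := by rw [hu]; abel
    rw [h, @norm_add_sq_real]
  have h1 : ‖G y - G x‖ ≤ β * ‖v‖ := by
    calc ‖G y - G x‖ = ‖G x - G y‖ := norm_sub_rev _ _
    _ ≤ β * ‖x - y‖ := hLip x y
    _ = β * ‖v‖ := by rw [hv, norm_sub_rev]
  have h2 : ‖J v‖ ≤ θ₂ * ‖v‖ := by
    calc ‖J v‖ ≤ ‖J‖ * ‖v‖ := J.le_opNorm v
    _ ≤ θ₂ * ‖v‖ := by gcongr; exact hJ x
  have h3 : ⟪u, G y - G x⟫ ≤ ‖u‖ * ‖G y - G x‖ := real_inner_le_norm u _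
  have h4 : -(‖u‖ * ‖J v‖) ≤ ⟪u, J v⟫ := neg_le_of_neg_le (by
    have := real_inner_le_norm u (-(J v)); simpa [inner_neg_right] using this)
  have hn1 : (0:ℝ) ≤ ‖u‖ := norm_nonneg u
  have hn2 : (0:ℝ) ≤ ‖G y - G x‖ := norm_nonneg _
  have hn3 : (0:ℝ) ≤ ‖J v‖ := norm_nonneg _
  nlinarith [sq_nonneg ‖v‖, norm_nonneg v, mul_le_mul_of_nonneg_left h1 hn1,
    mul_le_mul_of_nonneg_left h2 hn1, sq_abs ‖G y - G x‖]
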